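/- Let X be a real random variable and (cₙ) a sequence of positive reals with cₙ/√n nondecreasing and tending to infinity. If ∑ₙ P(|X| ≥ cₙ) < ∞, then ∑ₙ E[|X|³ 1{|X| ≤ cₙ}]/cₙ³ < ∞. -/

import Mathlib

private lemma step_ineq (M : ℕ) (hM : 1 ≤ M) :
    (1:ℝ)/(((M:ℝ)+1) * Real.sqrt ((M:ℝ)+1)) ≤ 2 / Real.sqrt (M:ℝ) - 2 / Real.sqrt ((M:ℝ)+1) := by
  have hM1 : (1:ℝ) ≤ (M:ℝ) := by exact_mod_cast hM
  have ha : 0 < Real.sqrt (M:ℝ) := Real.sqrt_pos.2 (by linarith)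
  have hb : 0 < Real.sqrt ((M:ℝ)+1) := Real.sqrt_pos.2 (by linarith)
  set a := Real.sqrt (M:ℝ) with hadef
  set b := Real.sqrt ((M:ℝ)+1) with hbdef
  have ha2 : a^2 = (M:ℝ) := Real.sq_sqrt (by linarith)
  have hb2 : b^2 = (M:ℝ)+1 := Real.sq_sqrt (by linarith)
  have hab : a ≤ b := Real.sqrt_le_sqrt (by linarith)
  have h1 : b^2 - a^2 = 1 := by rw [ha2, hb2]; ring
  rw [div_sub_div _ _ ha.ne' hb.ne', div_le_div_iff₀ (by positivity) (by positivity)]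
  nlinarith [mul_pos ha hb, mul_pos (mul_pos ha hb) hb, mul_nonneg (mul_nonneg ha.le hb.le) (sub_nonneg.2 hab), mul_nonneg (mul_nonneg hb.le hb.le) (sub_nonneg.2 hab), mul_nonneg (mul_nonneg (mul_nonneg hb.le hb.le) hb.le) (sub_nonneg.2 hab)]

private lemma sum_tail (k N : ℕ) :
    ∑ i ∈ Finset.Ico k N, (1:ℝ)/(((i:ℝ)+1) * Real.sqrt ((i:ℝ)+1)) ≤ 3 / Real.sqrt ((k:ℝ)+1) := by
  have hk : 0 < Real.sqrt ((k:ℝ)+1) := Real.sqrt_pos.2 (by positivity)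
  rcases le_or_gt N k with h | h
  · rw [Finset.Ico_eq_empty (by omega), Finset.sum_empty]; positivity
  · have main : ∀ M, k+1 ≤ M → ∑ i ∈ Finset.Ico k M, (1:ℝ)/(((i:ℝ)+1) * Real.sqrt ((i:ℝ)+1))
        ≤ (1:ℝ)/(((k:ℝ)+1) * Real.sqrt ((k:ℝ)+1)) + 2/Real.sqrt ((k:ℝ)+1) - 2/Real.sqrt (M:ℝ) := by
      intro M hM
      induction M, hM using Nat.le_induction with
      | base =>
        rw [Nat.Ico_succ_singleton, Finset.sum_singleton]
        push_cast
        linarith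
      | succ M hM ih =>
        rw [Finset.sum_Ico_succ_top (by omega)]
        have hs := step_ineq M (by omega)
        push_cast
        push_cast at ih hs
        linarith
    have h2 := main N (by omega)
    have h3 : (1:ℝ)/(((k:ℝ)+1) * Real.sqrt ((k:ℝ)+1)) ≤ 1 / Real.sqrt ((k:ℝ)+1) := by
      apply one_div_le_one_div_of_le hk
      exact le_mul_of_one_le_left hk.le (by push_cast; linarith)
    have h4 : (0:ℝ) ≤ 2 / Real.sqrt (N:ℝ) := by positivity
    have h5 : (1:ℝ)/Real.sqrt ((k:ℝ)+1) + 2/Real.sqrt ((k:ℝ)+1) = 3/Real.sqrt ((k:ℝ)+1) := by ring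
    linarith

private lemma key_bound (c : ℕ → ℝ) (hcpos : ∀ n, 1 ≤ n → 0 < c n)
    (hmono : ∀ m n, 1 ≤ m → m ≤ n → c m / Real.sqrt m ≤ c n / Real.sqrt n)
    (x : ℝ) (hx : 0 ≤ x) (N : ℕ) :
    ∑ i ∈ Finset.range N, (if x ≤ c (i+1) then x ^ 3 else 0) / (c (i+1)) ^ 3
      ≤ 3 * (1 + ∑ i ∈ Finset.range N, (if c (i+1) ≤ x then (1:ℝ) else 0)) := by
  have hindnn : ∀ i ∈ Finset.range N, (0:ℝ) ≤ (if c (i+1) ≤ x then (1:ℝ) else 0) := by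
    intro i _; split <;> norm_num
  by_cases hex : ∃ i, i < N ∧ x ≤ c (i + 1)
  case neg =>
    push_neg at hex
    have hz : ∑ i ∈ Finset.range N, (if x ≤ c (i+1) then x ^ 3 else 0) / (c (i+1)) ^ 3 = 0 :=
      Finset.sum_eq_zero fun i hi => by
        rw [if_neg (not_le.2 (hex i (Finset.mem_range.1 hi))), zero_div]
    rw [hz]
    have := Finset.sum_nonneg hindnn
    linarith
  case pos =>
    obtain ⟨j, hjN, hj⟩ := hex
    have hfind : ∃ i, x ≤ c (i+1) := ⟨j, hj⟩
    set i₀ := Nat.find hfind with hi₀def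
    have hi₀ : x ≤ c (i₀+1) := Nat.find_spec hfind
    have hi₀N : i₀ < N := lt_of_le_of_lt (Nat.find_min' hfind hj) hjN
    have hs : 0 < Real.sqrt ((i₀:ℝ)+1) := Real.sqrt_pos.2 (by positivity)
    set s := Real.sqrt ((i₀:ℝ)+1) with hsdef
    have hs2 : s^2 = (i₀:ℝ)+1 := Real.sq_sqrt (by positivity)
    -- RHS count
    have hRHS : (i₀ : ℝ) ≤ ∑ i ∈ Finset.range N, (if c (i+1) ≤ x then (1:ℝ) else 0) := by
      have e1 : ∑ i ∈ Finset.range i₀, (if c (i+1) ≤ x then (1:ℝ) else 0) = (i₀ : ℝ) := by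
        rw [Finset.sum_congr rfl (fun i hi => if_pos (le_of_lt (lt_of_not_ge (Nat.find_min hfind (Finset.mem_range.1 hi)))))]
        simp
        rfl
      calc (i₀:ℝ) = ∑ i ∈ Finset.range i₀, (if c (i+1) ≤ x then (1:ℝ) else 0) := e1.symm
        _ ≤ _ := Finset.sum_le_sum_of_subset_of_nonneg
              (Finset.range_subset_range.2 hi₀N.le) (fun i hi _ => hindnn i hi)
    -- LHS bound
    have hterm : ∀ i ∈ Finset.Ico i₀ N,
        (if x ≤ c (i+1) then x ^ 3 else 0) / (c (i+1)) ^ 3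
          ≤ (((i₀:ℝ)+1) * s) * ((1:ℝ)/(((i:ℝ)+1) * Real.sqrt ((i:ℝ)+1))) := by
      intro i hi
      obtain ⟨hii₀, hiN⟩ := Finset.mem_Ico.1 hi
      have hc : (0:ℝ) < c (i+1) := hcpos (i+1) (by omega)
      have ht : 0 < Real.sqrt ((i:ℝ)+1) := Real.sqrt_pos.2 (by positivity)
      set t := Real.sqrt ((i:ℝ)+1) with htdef
      have ht2 : t^2 = (i:ℝ)+1 := Real.sq_sqrt (by positivity)
      by_cases hxi : x ≤ c (i+1)
      · rw [if_pos hxi]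
        have hmono' := hmono (i₀+1) (i+1) (by omega) (by omega)
        push_cast at hmono'
        rw [div_le_div_iff₀ hs ht] at hmono'
        have hkey : x * t ≤ c (i+1) * s := le_trans (mul_le_mul_of_nonneg_right hi₀ ht.le) hmono'
        have hcube : (x*t)^3 ≤ (c (i+1) * s)^3 := pow_le_pow_left₀ (by positivity) hkey 3
        rw [div_le_iff₀ (by positivity), mul_one_div, div_mul_eq_mul_div, le_div_iff₀ (by positivity)]
        calc x ^ 3 * (((i:ℝ)+1) * t) = (x*t)^3 := by rw [← ht2]; ring
          _ ≤ (c (i+1) * s)^3 := hcube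
          _ = ((i₀:ℝ)+1) * s * c (i+1) ^ 3 := by rw [← hs2]; ring
      · rw [if_neg hxi, zero_div]
        positivity
    calc ∑ i ∈ Finset.range N, (if x ≤ c (i+1) then x ^ 3 else 0) / (c (i+1)) ^ 3
        = ∑ i ∈ Finset.Ico i₀ N, (if x ≤ c (i+1) then x ^ 3 else 0) / (c (i+1)) ^ 3 := by
          rw [Finset.range_eq_Ico, ← Finset.sum_Ico_consecutive _ (Nat.zero_le i₀) hi₀N.le]
          have : ∑ i ∈ Finset.Ico 0 i₀, (if x ≤ c (i+1) then x ^ 3 else 0) / (c (i+1)) ^ 3 = 0 :=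
            Finset.sum_eq_zero fun i hi => by
              rw [if_neg (Nat.find_min hfind ((Finset.mem_Ico.1 hi).2)), zero_div]
          rw [this, zero_add]
      _ ≤ ∑ i ∈ Finset.Ico i₀ N, (((i₀:ℝ)+1) * s) * ((1:ℝ)/(((i:ℝ)+1) * Real.sqrt ((i:ℝ)+1))) :=
          Finset.sum_le_sum hterm
      _ = (((i₀:ℝ)+1) * s) * ∑ i ∈ Finset.Ico i₀ N, (1:ℝ)/(((i:ℝ)+1) * Real.sqrt ((i:ℝ)+1)) :=
          (Finset.mul_sum _ _ _).symm
      _ ≤ (((i₀:ℝ)+1) * s) * (3 / s) := by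
          apply mul_le_mul_of_nonneg_left (sum_tail i₀ N) (by positivity)
      _ = 3 * ((i₀:ℝ)+1) := by field_simp
      _ ≤ 3 * (1 + ∑ i ∈ Finset.range N, (if c (i+1) ≤ x then (1:ℝ) else 0)) := by linarith

open MeasureTheory ProbabilityTheory Filter Set
open scoped ProbabilityTheory

set_option maxHeartbeats 1000000 in
theorem stmt_3 {Ω : Type*} [MeasureSpace Ω] [IsProbabilityMeasure (ℙ : Measure Ω)]
    (X : Ω → ℝ) (hX : Measurable X)
    (c : ℕ → ℝ) (hcpos : ∀ n, 1 ≤ n → 0 < c n)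
    (hmono : ∀ m n, 1 ≤ m → m ≤ n → c m / Real.sqrt m ≤ c n / Real.sqrt n)
    (htop : Tendsto (fun n => c n / Real.sqrt n) atTop atTop)
    (hsum : Summable (fun n => (ℙ {ω | c n ≤ |X ω|}).toReal)) :
    Summable (fun n => (∫ ω, (if |X ω| ≤ c n then |X ω| ^ 3 else 0)) / (c n) ^ 3) := by
  have hmeas : ∀ n, MeasurableSet {ω | c n ≤ |X ω|} := fun n =>
    measurableSet_le measurable_const hX.abs
  have hgm : ∀ n, Measurable (fun ω => (if |X ω| ≤ c n then |X ω| ^ 3 else 0 : ℝ)) := fun n =>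
    Measurable.ite (measurableSet_le hX.abs measurable_const) (hX.abs.pow_const 3) measurable_const
  have hgint : ∀ n, 1 ≤ n → Integrable (fun ω => (if |X ω| ≤ c n then |X ω| ^ 3 else 0 : ℝ)) := by
    intro n hn
    refine (integrable_const ((c n)^3)).mono' (hgm n).aestronglyMeasurable ?_
    filter_upwards with ω
    rw [Real.norm_eq_abs]
    split
    · next h =>
      rw [abs_of_nonneg (by positivity)]
      exact pow_le_pow_left₀ (abs_nonneg _) h 3
    · next h =>
      simpa using pow_nonneg (hcpos n hn).le 3
  have hindeq : ∀ n, (fun ω => (if c n ≤ |X ω| then (1:ℝ) else 0))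
      = Set.indicator {ω | c n ≤ |X ω|} (fun _ => (1:ℝ)) := by
    intro n; ext ω; simp [Set.indicator_apply, Set.mem_setOf_eq]
  have hindint : ∀ n, Integrable (fun ω => (if c n ≤ |X ω| then (1:ℝ) else 0)) := by
    intro n; rw [hindeq n]; exact (integrable_const 1).indicator (hmeas n)
  have hindval : ∀ n, ∫ ω, (if c n ≤ |X ω| then (1:ℝ) else 0) = (ℙ {ω | c n ≤ |X ω|}).toReal := by
    intro n
    rw [hindeq n, integral_indicator_const (1:ℝ) (hmeas n)]
    simp
    rfl
  rw [← summable_nat_add_iff 1]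
  have hsum' : Summable (fun n => (ℙ {ω | c (n+1) ≤ |X ω|}).toReal) :=
    (summable_nat_add_iff 1).2 hsum
  apply summable_of_sum_range_le
    (c := 3 * (1 + ∑' n, (ℙ {ω | c (n+1) ≤ |X ω|}).toReal))
  · intro n
    apply div_nonneg _ (pow_nonneg (hcpos (n+1) (by omega)).le 3)
    apply integral_nonneg
    intro ω
    dsimp
    split <;> positivity
  · intro N
    have e1 : ∀ i ∈ Finset.range N,
        (∫ ω, (if |X ω| ≤ c (i+1) then |X ω| ^ 3 else 0)) / (c (i+1)) ^ 3
          = ∫ ω, (if |X ω| ≤ c (i+1) then |X ω| ^ 3 else 0) / (c (i+1)) ^ 3 :=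
      fun i _ => (integral_div _ _).symm
    rw [Finset.sum_congr rfl e1,
      ← integral_finset_sum _ (fun i _ => (hgint (i+1) (by omega)).div_const _)]
    have step2 : (∫ ω, ∑ i ∈ Finset.range N, (if |X ω| ≤ c (i+1) then |X ω| ^ 3 else 0) / (c (i+1)) ^ 3)
        ≤ ∫ ω, 3 * (1 + ∑ i ∈ Finset.range N, (if c (i+1) ≤ |X ω| then (1:ℝ) else 0)) := by
      apply integral_mono
        (integrable_finset_sum _ fun i _ => (hgint (i+1) (by omega)).div_const _)
        (((integrable_const (1:ℝ)).add (integrable_finset_sum _ fun i _ => hindint (i+1))).const_mul 3)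
      intro ω
      exact key_bound c hcpos hmono (|X ω|) (abs_nonneg _) N
    refine le_trans step2 ?_
    rw [integral_const_mul,
      integral_add (integrable_const 1) (integrable_finset_sum _ fun i _ => hindint (i+1)),
      integral_finset_sum _ (fun i _ => hindint (i+1)),
      Finset.sum_congr rfl (fun i _ => hindval (i+1))]
    simp only [integral_const, measure_univ, probReal_univ, ENNReal.toReal_one, smul_eq_mul, mul_one, one_smul]
    have hle : ∑ i ∈ Finset.range N, (ℙ {ω | c (i+1) ≤ |X ω|}).toReal
        ≤ ∑' n, (ℙ {ω | c (n+1) ≤ |X ω|}).toReal :=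
      Summable.sum_le_tsum (Finset.range N) (fun i _ => ENNReal.toReal_nonneg) hsum'
    linarith
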